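/- Suppose s₁, …, s_r are distinct primes, t is a positive integer, and σ(s₁·s₂⋯s_r) = 2^r·t where t is odd and squarefree with every prime factor of t exceeding 2^r + 1. If x is a positive integer divisible by each s_i exactly once and σ(x) = 2^r·t, then x = s₁·s₂⋯s_r. -/

import Mathlib

open Finset ArithmeticFunction
open scoped ArithmeticFunction.sigma

/-- If `σ(s₁ ⋯ s_r) = 2^r t` with `t` odd and squarefree, all prime factors of `t`
exceeding `2^r + 1`, and `x` is divisible by each distinct prime `s_i` exactly once
with `σ(x) = 2^r t`, then `x = s₁ ⋯ s_r`. -/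
theorem sigma_forces_product (r : ℕ) (s : Fin r → ℕ) (hs : ∀ i, (s i).Prime)
    (hinj : Function.Injective s) (t : ℕ) (ht0 : 0 < t) (htodd : Odd t)
    (htsf : Squarefree t) (htfac : ∀ q : ℕ, q.Prime → q ∣ t → 2 ^ r + 1 < q)
    (hσ : σ 1 (∏ i, s i) = 2 ^ r * t)
    (x : ℕ) (hx : 0 < x)
    (hdvd : ∀ i, s i ∣ x ∧ ¬ (s i) ^ 2 ∣ x)
    (hσx : σ 1 x = 2 ^ r * t) :
    x = ∏ i, s i := by
  classical
  -- the product divides x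
  have hP : (∏ i, s i) ∣ x := by
    have := Finset.prod_primes_dvd (s := Finset.univ.image s) x
      (fun a ha => by
        obtain ⟨i, _, rfl⟩ := Finset.mem_image.mp ha
        exact (hs i).prime)
      (fun a ha => by
        obtain ⟨i, _, rfl⟩ := Finset.mem_image.mp ha
        exact (hdvd i).1)
    rwa [Finset.prod_image (fun i _ j _ h => hinj h)] at this
  obtain ⟨m, hm⟩ := hP
  have hcop : Nat.Coprime (∏ i, s i) m := by
    apply Nat.coprime_prod_left_iff.mpr
    intro i _
    rw [(hs i).coprime_iff_not_dvd]
    intro hdvdm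
    exact (hdvd i).2 (by rw [hm, sq]; exact mul_dvd_mul (Finset.dvd_prod_of_mem s (Finset.mem_univ i)) hdvdm)
  have hσm : σ 1 m = 1 := by
    have h2 : σ 1 x = σ 1 (∏ i, s i) * σ 1 m := by
      rw [hm, isMultiplicative_sigma.map_mul_of_coprime hcop]
    rw [hσx, hσ] at h2
    have hpos : 0 < 2 ^ r * t := by positivity
    exact (Nat.eq_of_mul_eq_mul_left hpos (by rw [mul_one]; exact h2)).symm
  have hm1 : m = 1 := by
    by_contra hne1
    have hm0 : m ≠ 0 := by
      rintro rfl
      simp at hσm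
    have h1m : 1 < m := Nat.lt_of_le_of_ne (Nat.one_le_iff_ne_zero.mpr hm0) (Ne.symm hne1)
    have : m ≤ σ 1 m := by
      rw [sigma_one_apply]
      exact Finset.single_le_sum (fun d _ => Nat.zero_le d)
        (Nat.mem_divisors_self m hm0)
    omega
  rw [hm, hm1, mul_one]
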